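/- Let $K \subseteq \mathbb{R}^n$ be an ellipsoidal cone, so that $K = T(\mathcal{L}^n_+)$ for an invertible real $n \times n$ matrix $T$. Then, for a real $n \times n$ matrix $A$, the matrix $T A T^{-1}$ is $K$-nonnegative (i.e. $TAT^{-1}(K) \subseteq K$) if and only if for every $\mathcal{L}^n_+$-semipositive matrix $B$, the matrix $A + B$ is $\mathcal{L}^n_+$-semipositive. -/

import Mathlib

open Matrix Set

/-- The Lorentz (ice-cream) cone in `ℝ^(n+1)`. -/
def lorentzCone (n : ℕ) : Set (Fin (n + 1) → ℝ) :=
  {x | 0 ≤ x (Fin.last n) ∧ ∑ i : Fin n, (x i.castSucc) ^ 2 ≤ (x (Fin.last n)) ^ 2}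

/-- `A` is `ℒⁿ₊`-semipositive. -/
def Semipositive {n : ℕ} (A : Matrix (Fin (n + 1)) (Fin (n + 1)) ℝ) : Prop :=
  ∃ x ∈ interior (lorentzCone n), A.mulVec x ∈ interior (lorentzCone n)

section LorentzAux

variable {n : ℕ}


lemma dot_aux {a b : Fin (n+1) → ℝ} (ha1 : 0 ≤ a (Fin.last n))
    (ha2 : ∑ i : Fin n, (a i.castSucc) ^ 2 ≤ (a (Fin.last n)) ^ 2)
    (hb1 : 0 ≤ b (Fin.last n))
    (hb2 : ∑ i : Fin n, (b i.castSucc) ^ 2 ≤ (b (Fin.last n)) ^ 2) :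
    |∑ i : Fin n, a i.castSucc * b i.castSucc| ≤ a (Fin.last n) * b (Fin.last n) := by
  have cs := Finset.sum_mul_sq_le_sq_mul_sq Finset.univ
    (fun i : Fin n => a i.castSucc) (fun i => b i.castSucc)
  have h1 : (0:ℝ) ≤ ∑ i : Fin n, (a i.castSucc)^2 := Finset.sum_nonneg fun i _ => sq_nonneg _
  have h2 : (0:ℝ) ≤ ∑ i : Fin n, (b i.castSucc)^2 := Finset.sum_nonneg fun i _ => sq_nonneg _
  rw [abs_le]
  constructor <;> nlinarith [cs, mul_nonneg ha1 hb1, mul_nonneg h1 h2]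

lemma lor_add {a b : Fin (n+1) → ℝ} (ha : a ∈ lorentzCone n) (hb : b ∈ lorentzCone n) :
    a + b ∈ lorentzCone n := by
  obtain ⟨ha1, ha2⟩ := ha
  obtain ⟨hb1, hb2⟩ := hb
  have key := (abs_le.1 (dot_aux ha1 ha2 hb1 hb2)).2
  refine ⟨by simpa using add_nonneg ha1 hb1, ?_⟩
  have : ∑ i : Fin n, ((a+b) i.castSucc)^2
      = ∑ i : Fin n, (a i.castSucc)^2 + 2 * (∑ i : Fin n, a i.castSucc * b i.castSucc)
        + ∑ i : Fin n, (b i.castSucc)^2 := by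
    rw [Finset.mul_sum, ← Finset.sum_add_distrib, ← Finset.sum_add_distrib]
    refine Finset.sum_congr rfl fun i _ => ?_
    simp [Pi.add_apply]; ring
  simp only [Pi.add_apply] at this ⊢
  rw [this]; nlinarith

lemma lor_dot_nonneg {y x : Fin (n+1) → ℝ} (hy : y ∈ lorentzCone n) (hx : x ∈ lorentzCone n) :
    0 ≤ y ⬝ᵥ x := by
  obtain ⟨hy1, hy2⟩ := hy
  obtain ⟨hx1, hx2⟩ := hx
  have key := (abs_le.1 (dot_aux hy1 hy2 hx1 hx2)).1
  rw [dotProduct, Fin.sum_univ_castSucc]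
  linarith



lemma cont1 : Continuous fun x : Fin (n+1) → ℝ => ∑ i : Fin n, (x i.castSucc)^2 := by
  apply continuous_finset_sum
  intro i _
  exact (continuous_apply _).pow 2

lemma cont2 : Continuous fun x : Fin (n+1) → ℝ => (x (Fin.last n))^2 :=
  (continuous_apply _).pow 2

lemma lor_closed : IsClosed (lorentzCone n) :=
  (isClosed_le continuous_const (continuous_apply _)).inter (isClosed_le cont1 cont2)

lemma strict_mem_interior {x : Fin (n+1) → ℝ} (h1 : 0 < x (Fin.last n))
    (h2 : ∑ i : Fin n, (x i.castSucc)^2 < (x (Fin.last n))^2) :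
    x ∈ interior (lorentzCone n) := by
  have hopen : IsOpen {x : Fin (n+1) → ℝ | 0 < x (Fin.last n) ∧
      ∑ i : Fin n, (x i.castSucc)^2 < (x (Fin.last n))^2} :=
    (isOpen_lt continuous_const (continuous_apply _)).inter (isOpen_lt cont1 cont2)
  have hsub : {x : Fin (n+1) → ℝ | 0 < x (Fin.last n) ∧
      ∑ i : Fin n, (x i.castSucc)^2 < (x (Fin.last n))^2} ⊆ interior (lorentzCone n) :=
    interior_maximal (fun z hz => ⟨le_of_lt hz.1, le_of_lt hz.2⟩) hopen
  exact hsub ⟨h1, h2⟩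

lemma smul_e_mem_interior {ε : ℝ} (hε : 0 < ε) :
    ε • (Pi.single (Fin.last n) 1 : Fin (n+1) → ℝ) ∈ interior (lorentzCone n) := by
  apply strict_mem_interior
  · simpa using hε
  · have h : ∀ i : Fin n, (ε • (Pi.single (Fin.last n) 1 : Fin (n+1) → ℝ)) i.castSucc = 0 := by
      intro i
      simp [Pi.single_apply, Fin.ne_of_lt (Fin.castSucc_lt_last i)]
    rw [Finset.sum_congr rfl fun i _ => by rw [h i, zero_pow two_ne_zero]]
    simpa using pow_pos hε 2




lemma add_interior {a b : Fin (n+1) → ℝ} (ha : a ∈ lorentzCone n)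
    (hb : b ∈ interior (lorentzCone n)) : a + b ∈ interior (lorentzCone n) := by
  have hopen : IsOpen ((a + ·) '' interior (lorentzCone n)) :=
    (Homeomorph.addLeft a).isOpenMap _ isOpen_interior
  have hsub : ((a + ·) '' interior (lorentzCone n)) ⊆ lorentzCone n := by
    rintro _ ⟨z, hz, rfl⟩
    exact lor_add ha (interior_subset hz)
  exact interior_maximal hsub hopen ⟨b, hb, rfl⟩

lemma lor_last_pos {y : Fin (n+1) → ℝ} (hy : y ∈ lorentzCone n) (hy0 : y ≠ 0) :
    0 < y (Fin.last n) := by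
  rcases lt_or_eq_of_le hy.1 with h | h
  · exact h
  · exfalso
    apply hy0
    have hsum : ∑ i : Fin n, (y i.castSucc)^2 ≤ 0 := by
      have := hy.2; rw [← h] at this; simpa using this
    have hall : ∀ i : Fin n, (y i.castSucc)^2 = 0 := by
      intro i
      have hnn : (0:ℝ) ≤ ∑ i : Fin n, (y i.castSucc)^2 :=
        Finset.sum_nonneg fun _ _ => sq_nonneg _
      have hz : ∑ i : Fin n, (y i.castSucc)^2 = 0 := le_antisymm hsum hnn
      exact (Finset.sum_eq_zero_iff_of_nonneg (fun _ _ => sq_nonneg _)).1 hz i (Finset.mem_univ _)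
    funext j
    induction j using Fin.lastCases with
    | last => exact h.symm
    | cast i => exact pow_eq_zero_iff two_ne_zero |>.1 (hall i)

lemma lor_dot_pos {y z : Fin (n+1) → ℝ} (hy : y ∈ lorentzCone n) (hy0 : y ≠ 0)
    (hdual : ∀ x ∈ lorentzCone n, 0 ≤ y ⬝ᵥ x)
    (hz : z ∈ interior (lorentzCone n)) : 0 < y ⬝ᵥ z := by
  obtain ⟨ε, hε, hball⟩ := Metric.isOpen_iff.1 isOpen_interior z hz
  set δ : ℝ := ε / (2 * (‖y‖ + 1)) with hδ
  have hnorm : (0:ℝ) < ‖y‖ + 1 := by positivity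
  have hδpos : 0 < δ := by positivity
  have hmem : z - δ • y ∈ lorentzCone n := by
    apply interior_subset
    apply hball
    rw [Metric.mem_ball, dist_eq_norm]
    have : z - δ • y - z = -(δ • y) := by module
    rw [this, norm_neg, norm_smul, Real.norm_eq_abs, abs_of_pos hδpos]
    calc δ * ‖y‖ < δ * (‖y‖ + 1) := by nlinarith
      _ = ε / 2 := by rw [hδ]; field_simp
      _ < ε := by linarith
  have h1 := hdual _ hmem
  have h2 : y ⬝ᵥ (z - δ • y) = y ⬝ᵥ z - δ * (y ⬝ᵥ y) := by
    simp only [dotProduct, Pi.sub_apply, Pi.smul_apply, smul_eq_mul, Finset.mul_sum]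
    rw [← Finset.sum_sub_distrib]
    exact Finset.sum_congr rfl fun i _ => by ring
  have h3 : 0 < y ⬝ᵥ y := by
    have : y ⬝ᵥ y = ∑ i, (y i)^2 := by simp [dotProduct, sq]
    rw [this]
    have hne : ∃ i, y i ≠ 0 := by
      by_contra hc
      push_neg at hc
      exact hy0 (funext hc)
    obtain ⟨i, hi⟩ := hne
    exact Finset.sum_pos' (fun _ _ => sq_nonneg _) ⟨i, Finset.mem_univ _, by positivity⟩
  nlinarith [h1, h2]



lemma exists_dual_neg {z : Fin (n+1) → ℝ} (hz : z ∉ lorentzCone n) :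
    ∃ y ∈ lorentzCone n, y ⬝ᵥ z < 0 := by
  set S : ℝ := ∑ i : Fin n, (z i.castSucc)^2 with hS
  have hSnn : 0 ≤ S := Finset.sum_nonneg fun _ _ => sq_nonneg _
  by_cases hcase : S ≤ (z (Fin.last n))^2 ∧ 0 ≤ z (Fin.last n)
  · exact absurd ⟨hcase.2, hcase.1⟩ hz
  · push_neg at hcase
    by_cases hbig : (z (Fin.last n))^2 < S
    · -- construct y
      set r : ℝ := Real.sqrt S with hr
      have hrpos : 0 < r := Real.sqrt_pos.2 (by nlinarith [sq_nonneg (z (Fin.last n))])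
      have hr2 : r^2 = S := Real.sq_sqrt hSnn
      refine ⟨fun j => if j = Fin.last n then r else -(z j), ⟨?_, ?_⟩, ?_⟩
      · simpa using hrpos.le
      · have hlast : (fun j => if j = Fin.last n then r else -(z j)) (Fin.last n) = r := by simp
        have hcs : ∀ i : Fin n,
            (fun j => if j = Fin.last n then r else -(z j)) i.castSucc = -(z i.castSucc) := by
          intro i; simp [Fin.ne_of_lt (Fin.castSucc_lt_last i)]
        rw [hlast, Finset.sum_congr rfl fun i _ => by rw [hcs i], hr2]
        simp [hS]
      · rw [dotProduct, Fin.sum_univ_castSucc]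
        have hterm : ∀ i : Fin n,
            (fun j => if j = Fin.last n then r else -(z j)) i.castSucc * z i.castSucc
            = -((z i.castSucc)^2) := by
          intro i; simp [Fin.ne_of_lt (Fin.castSucc_lt_last i)]; ring
        rw [Finset.sum_congr rfl fun i _ => hterm i, Finset.sum_neg_distrib]
        simp only [if_pos rfl, eq_self_iff_true, if_true]
        -- goal: -S + r * z last < 0
        have habs : |z (Fin.last n)| < r := by
          rw [← Real.sqrt_sq_eq_abs]
          exact Real.sqrt_lt_sqrt (sq_nonneg _) hbig
        have h1 : z (Fin.last n) < r := lt_of_le_of_lt (le_abs_self _) habs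
        nlinarith [hr2, mul_neg_of_pos_of_neg hrpos (sub_neg.2 h1)]
    · push_neg at hbig
      have hneg : z (Fin.last n) < 0 := hcase hbig
      refine ⟨(Pi.single (Fin.last n) 1 : Fin (n+1) → ℝ), ⟨by simp, ?_⟩, ?_⟩
      · have : ∀ i : Fin n, (Pi.single (Fin.last n) 1 : Fin (n+1) → ℝ) i.castSucc = 0 := fun i => by
          simp [Pi.single_apply, Fin.ne_of_lt (Fin.castSucc_lt_last i)]
        rw [Finset.sum_congr rfl fun i _ => by rw [this i, zero_pow two_ne_zero]]
        simp
      · have : (Pi.single (Fin.last n) 1 : Fin (n+1) → ℝ) ⬝ᵥ z = z (Fin.last n) := by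
          simp [dotProduct, Pi.single_apply]
        rw [this]; exact hneg

end LorentzAux

theorem stmt_10 {n : ℕ} (K : Set (Fin (n + 1) → ℝ))
    (T : Matrix (Fin (n + 1)) (Fin (n + 1)) ℝ) (hT : IsUnit T.det)
    (hK : K = T.mulVec '' lorentzCone n)
    (A : Matrix (Fin (n + 1)) (Fin (n + 1)) ℝ) :
    (∀ x ∈ K, (T * A * T⁻¹).mulVec x ∈ K) ↔
      (∀ B : Matrix (Fin (n + 1)) (Fin (n + 1)) ℝ,
        Semipositive B → Semipositive (A + B)) := by
  subst hK
  have hTT : T * A * T⁻¹ * T = T * A := by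
    rw [mul_assoc, Matrix.nonsing_inv_mul T hT, mul_one]
  have hred : (∀ x ∈ T.mulVec '' lorentzCone n, (T * A * T⁻¹).mulVec x ∈ T.mulVec '' lorentzCone n)
      ↔ (∀ u ∈ lorentzCone n, A.mulVec u ∈ lorentzCone n) := by
    constructor
    · intro h u hu
      have h1 := h (T.mulVec u) ⟨u, hu, rfl⟩
      rw [mulVec_mulVec, hTT] at h1
      obtain ⟨v, hv, hveq⟩ := h1
      have h2 : T⁻¹.mulVec (T.mulVec v) = T⁻¹.mulVec ((T * A).mulVec u) := by rw [hveq]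
      rw [mulVec_mulVec, mulVec_mulVec, Matrix.nonsing_inv_mul T hT, ← mul_assoc,
        Matrix.nonsing_inv_mul T hT, one_mulVec, one_mul] at h2
      rwa [h2] at hv
    · intro h x hx
      obtain ⟨u, hu, rfl⟩ := hx
      rw [mulVec_mulVec, hTT, ← mulVec_mulVec]
      exact ⟨A.mulVec u, h u hu, rfl⟩
  rw [hred]
  constructor
  · -- easy direction
    intro hA B ⟨x, hx, hBx⟩
    refine ⟨x, hx, ?_⟩
    rw [Matrix.add_mulVec]
    exact add_interior (hA x (interior_subset hx)) hBx
  · -- hard direction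
    intro hRHS u hu
    by_contra hAu
    set e : Fin (n+1) → ℝ := Pi.single (Fin.last n) 1 with he
    -- find ε
    obtain ⟨δ, hδ, hball⟩ := Metric.isOpen_iff.1 lor_closed.isOpen_compl (A.mulVec u) hAu
    set ε : ℝ := δ / (2 * (‖A.mulVec e‖ + 1)) with hε
    have hεpos : 0 < ε := by positivity
    set x₀ : Fin (n+1) → ℝ := u + ε • e with hx₀
    have hx₀int : x₀ ∈ interior (lorentzCone n) := add_interior hu (smul_e_mem_interior hεpos)
    have hAx₀ : A.mulVec x₀ ∉ lorentzCone n := by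
      have heq : A.mulVec x₀ = A.mulVec u + ε • A.mulVec e := by
        rw [hx₀, Matrix.mulVec_add, Matrix.mulVec_smul]
      have hmem : A.mulVec x₀ ∈ Metric.ball (A.mulVec u) δ := by
        rw [Metric.mem_ball, heq, dist_eq_norm]
        have : A.mulVec u + ε • A.mulVec e - A.mulVec u = ε • A.mulVec e := by module
        rw [this, norm_smul, Real.norm_eq_abs, abs_of_pos hεpos]
        have h1 : (0:ℝ) < ‖A.mulVec e‖ + 1 := by positivity
        calc ε * ‖A.mulVec e‖ < ε * (‖A.mulVec e‖ + 1) := by nlinarith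
          _ = δ / 2 := by rw [hε]; field_simp
          _ < δ := by linarith
      exact hball hmem
    obtain ⟨y₀, hy₀, hdot⟩ := exists_dual_neg hAx₀
    have hy₀ne : y₀ ≠ 0 := by
      rintro rfl
      simp [dotProduct] at hdot
    have hd : 0 < y₀ (Fin.last n) := lor_last_pos hy₀ hy₀ne
    set d : ℝ := y₀ (Fin.last n) with hdd
    set w : Fin (n+1) → ℝ := y₀ ᵥ* A with hw
    set B : Matrix (Fin (n+1)) (Fin (n+1)) ℝ := Matrix.of fun i j => -(e i) * w j / d with hB
    have hBmul : ∀ x : Fin (n+1) → ℝ, B.mulVec x = (-(w ⬝ᵥ x) / d) • e := by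
      intro x
      funext i
      simp only [hB, Matrix.mulVec, dotProduct, Matrix.of_apply, Pi.smul_apply, smul_eq_mul]
      calc ∑ j, -(e i) * w j / d * x j = ∑ j, (-(e i) / d) * (w j * x j) :=
            Finset.sum_congr rfl fun j _ => by ring
        _ = (-(e i) / d) * ∑ j, w j * x j := by rw [Finset.mul_sum]
        _ = -(∑ j, w j * x j) / d * e i := by ring
    have hdote : y₀ ⬝ᵥ e = d := by
      simp [he, dotProduct, Pi.single_apply, hdd]
    -- B is semipositive
    have hBsemi : Semipositive B := by
      refine ⟨x₀, hx₀int, ?_⟩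
      rw [hBmul x₀]
      have hc : 0 < -(w ⬝ᵥ x₀) / d := by
        have : w ⬝ᵥ x₀ = y₀ ⬝ᵥ A.mulVec x₀ := (Matrix.dotProduct_mulVec y₀ A x₀).symm
        rw [this]
        exact div_pos (by linarith) hd
      exact smul_e_mem_interior hc
    obtain ⟨v, hv, hABv⟩ := hRHS B hBsemi
    have hzero : y₀ ⬝ᵥ (A + B).mulVec v = 0 := by
      rw [Matrix.add_mulVec, dotProduct_add, hBmul v]
      have h1 : y₀ ⬝ᵥ ((-(w ⬝ᵥ v) / d) • e) = (-(w ⬝ᵥ v) / d) * (y₀ ⬝ᵥ e) := by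
        rw [dotProduct_smul]; simp
      have h2 : w ⬝ᵥ v = y₀ ⬝ᵥ A.mulVec v := (Matrix.dotProduct_mulVec y₀ A v).symm
      rw [h1, hdote, h2]
      field_simp
      ring
    have hpos : 0 < y₀ ⬝ᵥ (A + B).mulVec v :=
      lor_dot_pos hy₀ hy₀ne (fun x hx => lor_dot_nonneg hy₀ hx) hABv
    rw [hzero] at hpos
    exact lt_irrefl 0 hpos
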